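/- Consider minimizing H(d) = ∑_{t=0}^{N} w_t · exp(−ξ · E_{t−1}(d)) over feasible dose vectors d, where E_t(d) = ∑_{k=1}^{t} (α d_k + β d_k²), w_t > 0, ξ > 0, α, β ≥ 0, E_0 = 0, and feasibility constraints depend on d only through ∑ d_k and ∑ d_k² (plus per-day bounds 0 ≤ d_t ≤ d_max). Then there exists an optimal solution d* that is nonincreasing: d*_1 ≥ d*_2 ≥ … ≥ d*_N. -/
import Mathlib


open Finset Real

/-- Radiotherapy half of Lemma 2: over a nonempty, compact,
permutation-invariant feasible set, there exists an optimal dose schedule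
that is nonincreasing in time. -/
theorem exists_nonincreasing_optimal_schedule
    (N : ℕ) (w : ℕ → ℝ) (hw : ∀ t, t ≤ N → 0 < w t)
    (ξ α β dmax : ℝ) (hξ : 0 < ξ) (hα : 0 ≤ α) (hβ : 0 ≤ β) (hdmax : 0 < dmax)
    (S : Set (Fin N → ℝ)) (hne : S.Nonempty) (hcomp : IsCompact S)
    (hperm : ∀ d ∈ S, ∀ σ : Equiv.Perm (Fin N), (d ∘ σ) ∈ S)
    (hbox : ∀ d ∈ S, ∀ t, 0 ≤ d t ∧ d t ≤ dmax) :
    ∃ dstar ∈ S,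
      (∀ i j : Fin N, i ≤ j → dstar j ≤ dstar i) ∧
      ∀ d ∈ S,
        (∑ t ∈ Finset.range (N + 1), w t * Real.exp (-ξ *
            ∑ k ∈ Finset.univ.filter (fun k : Fin N => (k : ℕ) + 1 < t),
              (α * dstar k + β * dstar k ^ 2))) ≤
          ∑ t ∈ Finset.range (N + 1), w t * Real.exp (-ξ *
            ∑ k ∈ Finset.univ.filter (fun k : Fin N => (k : ℕ) + 1 < t),
              (α * d k + β * d k ^ 2)) := by
  classical
  set H : (Fin N → ℝ) → ℝ := fun d => ∑ t ∈ Finset.range (N + 1), w t * Real.exp (-ξ *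
      ∑ k ∈ Finset.univ.filter (fun k : Fin N => (k : ℕ) + 1 < t),
        (α * d k + β * d k ^ 2)) with hH
  have hcont : Continuous H := by
    apply continuous_finset_sum
    intro t _
    apply continuous_const.mul
    apply Real.continuous_exp.comp
    apply continuous_const.mul
    apply continuous_finset_sum
    intro k _
    exact (continuous_const.mul (continuous_apply k)).add
      (continuous_const.mul ((continuous_apply k).pow 2))
  obtain ⟨d0, hd0S, hmin⟩ := hcomp.exists_isMinOn hne hcont.continuousOn
  set σ : Equiv.Perm (Fin N) := Tuple.sort (fun i => -(d0 i)) with hσ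
  have hmono : Monotone ((fun i => -(d0 i)) ∘ σ) := Tuple.monotone_sort _
  set dstar : Fin N → ℝ := d0 ∘ σ with hds
  have hdstarS : dstar ∈ S := hperm d0 hd0S σ
  have hanti : ∀ i j : Fin N, i ≤ j → dstar j ≤ dstar i := by
    intro i j hij
    have := hmono hij
    simpa [hds] using this
  refine ⟨dstar, hdstarS, hanti, ?_⟩
  have hpos : ∀ k, 0 ≤ dstar k := fun k => (hbox dstar hdstarS k).1
  -- g is the antitone per-day damage from the sorted schedule
  set g : Fin N → ℝ := fun k => α * dstar k + β * dstar k ^ 2 with hg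
  have hganti : Antitone g := by
    intro i j hij
    have h1 : dstar j ≤ dstar i := hanti i j hij
    have h2 : 0 ≤ dstar j := hpos j
    have : dstar j ^ 2 ≤ dstar i ^ 2 := pow_le_pow_left₀ h2 h1 2
    simp only [hg]
    nlinarith
  -- key rearrangement step, per time t
  have hkey : ∀ t : ℕ,
      (∑ k ∈ Finset.univ.filter (fun k : Fin N => (k : ℕ) + 1 < t),
        (α * d0 k + β * d0 k ^ 2)) ≤
      ∑ k ∈ Finset.univ.filter (fun k : Fin N => (k : ℕ) + 1 < t),
        (α * dstar k + β * dstar k ^ 2) := by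
    intro t
    set χ : Fin N → ℝ := fun k => if (k : ℕ) + 1 < t then 1 else 0 with hχ
    have hχanti : Antitone χ := by
      intro i j hij
      simp only [hχ]
      by_cases hj : (j : ℕ) + 1 < t
      · have hi : (i : ℕ) + 1 < t := by
          have : (i : ℕ) ≤ (j : ℕ) := hij
          omega
        simp [hi, hj]
      · simp only [hj, if_false]
        by_cases hi : (i : ℕ) + 1 < t <;> simp [hi]
    have hmv : Monovary χ g := by
      intro i j hgij
      rcases lt_trichotomy i j with h | h | h
      · exact absurd (hganti h.le) (not_le.2 hgij)
      · simp [h]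
      · exact hχanti h.le
    have hre : ∑ k, χ k * g (σ⁻¹ k) ≤ ∑ k, χ k * g k :=
      hmv.sum_mul_comp_perm_le_sum_mul (σ := σ⁻¹)
    have hd0g : ∀ k, α * d0 k + β * d0 k ^ 2 = g (σ⁻¹ k) := by
      intro k
      simp [hg, hds]
    calc (∑ k ∈ Finset.univ.filter (fun k : Fin N => (k : ℕ) + 1 < t),
            (α * d0 k + β * d0 k ^ 2))
        = ∑ k, χ k * g (σ⁻¹ k) := by
          rw [Finset.sum_filter]
          refine Finset.sum_congr rfl fun k _ => ?_
          simp [hχ, hd0g k, ite_mul]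
      _ ≤ ∑ k, χ k * g k := hre
      _ = ∑ k ∈ Finset.univ.filter (fun k : Fin N => (k : ℕ) + 1 < t),
            (α * dstar k + β * dstar k ^ 2) := by
          rw [Finset.sum_filter]
          refine Finset.sum_congr rfl fun k _ => ?_
          simp [hχ, hg, ite_mul]
  intro d hd
  have h1 : H dstar ≤ H d0 := by
    apply Finset.sum_le_sum
    intro t ht
    have hwt : 0 < w t := hw t (Nat.lt_succ_iff.mp (Finset.mem_range.mp ht))
    apply mul_le_mul_of_nonneg_left _ hwt.le
    apply Real.exp_le_exp.2
    have hA := hkey t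
    nlinarith [hξ.le]
  have h2 : H d0 ≤ H d := hmin hd
  exact h1.trans h2
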